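/- Let G be a finite group whose commutator subgroup is proper (⁅⊤, ⊤⁆ ≠ (⊤ : Subgroup G)), and let g : G. Then there exist a group H with Nat.card H ≤ (Nat.card G)^2, an injective group homomorphism f : G →* H, and an element h : H with h^2 = f g. -/

import Mathlib

namespace EconRoot

lemma perm2eq (σ : Equiv.Perm (Fin 2)) : σ = 1 ∨ σ = Equiv.swap (0 : Fin 2) 1 := by revert σ; decide

variable (G : Type) [Group G]

/-- The permutation action of `Perm (Fin 2)` on `Fin 2 → G` as a hom into `MulAut`. -/
def permAutHom : Equiv.Perm (Fin 2) →* MulAut (Fin 2 → G) where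
  toFun σ :=
    { toFun := fun x => x ∘ σ.symm
      invFun := fun x => x ∘ σ
      left_inv := fun x => by funext i; simp
      right_inv := fun x => by funext i; simp
      map_mul' := fun x y => rfl }
  map_one' := by ext x i; rfl
  map_mul' := fun σ τ => by ext x i; rfl

/-- The wreath product `G ≀ ℤ/2`. -/
abbrev W := (Fin 2 → G) ⋊[permAutHom G] Equiv.Perm (Fin 2)

/-- Inversion as an automorphism of a commutative group. -/
def invAut (C : Type) [CommGroup C] : MulAut C where
  toFun := fun c => c⁻¹
  invFun := fun c => c⁻¹
  left_inv := inv_inv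
  right_inv := inv_inv
  map_mul' := fun a b => mul_inv a b

/-- The sign-like action of `Perm (Fin 2)` on a commutative group by inversion. -/
def signAut (C : Type) [CommGroup C] : Equiv.Perm (Fin 2) →* MulAut C where
  toFun σ := if σ = 1 then 1 else invAut C
  map_one' := if_pos rfl
  map_mul' := fun σ τ => by
    have h1 : invAut C * invAut C = 1 := by ext c; exact inv_inv c
    have hs : (Equiv.swap (0:Fin 2) 1) ≠ 1 := by revert σ; decide
    rcases perm2eq σ with hσ | hσ <;> rcases perm2eq τ with hτ | hτ <;>
      subst hσ <;> subst hτ <;>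
      simp [Equiv.swap_mul_self, hs, h1]

abbrev D (C : Type) [CommGroup C] := C ⋊[signAut C] Equiv.Perm (Fin 2)

variable {G} {C : Type} [CommGroup C]

/-- The homomorphism from the wreath product to `C ⋊ Perm (Fin 2)`. -/
def theta (ψ : G →* C) : W G →* D C where
  toFun w := ⟨ψ (w.left 0) * (ψ (w.left 1))⁻¹, w.right⟩
  map_one' := by ext <;> simp
  map_mul' := fun w w' => by
    have key : ψ ((w * w').left 0) * (ψ ((w * w').left 1))⁻¹ =
        ψ (w.left 0) * (ψ (w.left 1))⁻¹ *
          signAut C w.right (ψ (w'.left 0) * (ψ (w'.left 1))⁻¹) := by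
      have hl : ∀ i, (w * w').left i = w.left i * w'.left (w.right.symm i) := fun i => rfl
      rcases perm2eq w.right with hσ | hσ <;> rw [hσ] at hl ⊢
      · simp only [hl, signAut, MonoidHom.coe_mk, OneHom.coe_mk, if_pos rfl]
        simp [Equiv.Perm.one_symm, Equiv.Perm.one_apply, map_mul, mul_inv, mul_comm, mul_assoc, mul_left_comm]
      · have hs : (Equiv.swap (0:Fin 2) 1) ≠ 1 := by decide
        simp only [hl, signAut, MonoidHom.coe_mk, OneHom.coe_mk, if_neg hs,
          Equiv.symm_swap, Equiv.swap_apply_left, Equiv.swap_apply_right]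
        simp [invAut, map_mul, mul_inv, mul_comm, mul_assoc, mul_left_comm]
    ext
    · exact key
    · rfl

/-- The diagonal embedding of `G` into the wreath product. -/
def diagHom : G →* W G :=
  SemidirectProduct.inl.comp
    { toFun := fun x => fun _ => x
      map_one' := rfl
      map_mul' := fun _ _ => rfl }

lemma diagHom_injective : Function.Injective (diagHom (G := G)) := fun a b h => by
  have := congrArg SemidirectProduct.left h
  exact congrFun this 0

/-- The type-level product decomposition of the wreath product. -/
def wEquiv : W G ≃ (Fin 2 → G) × Equiv.Perm (Fin 2) where
  toFun w := (w.left, w.right)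
  invFun p := ⟨p.1, p.2⟩
  left_inv _ := rfl
  right_inv _ := rfl

end EconRoot

open EconRoot in
/-- Proposition 1, case (a): if the commutator subgroup of a finite group `G` is proper,
then `G` embeds into a group of order at most `|G|²` in which `g` is a square. -/
theorem economical_root_of_commutator_proper (G : Type) [Group G] [Finite G]
    (hG : ⁅(⊤ : Subgroup G), (⊤ : Subgroup G)⁆ ≠ ⊤) (g : G) :
    ∃ (H : Type) (_ : Group H) (f : G →* H),
      Nat.card H ≤ (Nat.card G) ^ 2 ∧
      Function.Injective f ∧
      ∃ h : H, h ^ 2 = f g := by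
  classical
  let C := Abelianization G
  let ψ : G →* C := Abelianization.of
  have hψsurj : Function.Surjective ψ := fun b => Quotient.inductionOn' b fun a => ⟨a, rfl⟩
  have hC : Nontrivial C := by
    rcases subsingleton_or_nontrivial C with h | h
    · exact absurd (QuotientGroup.subgroup_eq_top_of_subsingleton (commutator G) h) hG
    · exact h
  haveI : Finite (W G) := Finite.of_equiv _ (wEquiv (G := G)).symm
  let Θ : W G →* D C := theta ψ
  let d : D C := ⟨ψ g, Equiv.swap 0 1⟩
  let K : Subgroup (W G) := (Subgroup.zpowers d).comap Θ
  have hs : (Equiv.swap (0:Fin 2) 1) ≠ 1 := by decide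
  have hd2 : d * d = 1 := by
    refine SemidirectProduct.ext ?_ ?_
    · show ψ g * signAut C (Equiv.swap 0 1) (ψ g) = 1
      simp [signAut, invAut, hs]
    · exact Equiv.swap_mul_self _ _
  have hpow : ∀ k : ℤ, d ^ k = 1 ∨ d ^ k = d := by
    intro k
    have hd2' : d ^ (2:ℤ) = 1 := by rw [zpow_two]; exact hd2
    rcases Int.even_or_odd k with ⟨m, hm⟩ | ⟨m, hm⟩
    · left; rw [show k = 2*m by omega, zpow_mul, hd2', one_zpow]
    · right; rw [show k = 2*m+1 by omega, zpow_add, zpow_mul, hd2', one_zpow, one_mul, zpow_one]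
  -- K is a proper subgroup
  have hKne : K ≠ ⊤ := by
    obtain ⟨c₀, hc₀⟩ := exists_ne (1 : C)
    obtain ⟨x₀, hx₀⟩ := hψsurj c₀
    intro htop
    have hmem : (⟨fun i : Fin 2 => if i = 0 then x₀ else 1, 1⟩ : W G) ∈ K := htop ▸ Subgroup.mem_top _
    rw [Subgroup.mem_comap, Subgroup.mem_zpowers_iff] at hmem
    obtain ⟨k, hk⟩ := hmem
    have hΘval : Θ (⟨fun i : Fin 2 => if i = 0 then x₀ else 1, 1⟩ : W G) = (⟨c₀, 1⟩ : D C) := by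
      refine SemidirectProduct.ext ?_ ?_
      · show ψ (if (0:Fin 2) = 0 then x₀ else 1) * (ψ (if (1:Fin 2) = 0 then x₀ else 1))⁻¹ = c₀
        simp [hx₀]
      · rfl
    rw [hΘval] at hk
    rcases hpow k with h1 | h1 <;> rw [h1] at hk
    · exact hc₀ (congrArg SemidirectProduct.left hk).symm
    · exact hs (congrArg SemidirectProduct.right hk)
  -- cardinality bound
  have hcardW : Nat.card (W G) = 2 * Nat.card G ^ 2 := by
    rw [Nat.card_congr (wEquiv (G := G)), Nat.card_prod, Nat.card_fun]
    have h1 : Nat.card (Equiv.Perm (Fin 2)) = 2 := by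
      rw [Nat.card_eq_fintype_card]; decide
    rw [h1, Nat.card_eq_fintype_card (α := Fin 2), Fintype.card_fin, mul_comm]
  have hKcard : Nat.card K * K.index = 2 * Nat.card G ^ 2 := by
    rw [Subgroup.card_mul_index, hcardW]
  have hidx1 : K.index ≠ 1 := fun h => hKne (Subgroup.index_eq_one.mp h)
  have hidx0 : K.index ≠ 0 := Subgroup.index_ne_zero_of_finite
  have hK2 : Nat.card K ≤ Nat.card G ^ 2 := by
    have h2 : 2 ≤ K.index := by omega
    have := Nat.mul_le_mul_left (Nat.card K) h2
    omega
  -- the embedding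
  have hfmem : ∀ x : G, diagHom x ∈ K := by
    intro x
    rw [Subgroup.mem_comap]
    have hΘ1 : Θ (diagHom x) = 1 := by
      refine SemidirectProduct.ext ?_ ?_
      · show ψ x * (ψ x)⁻¹ = 1
        simp
      · rfl
    rw [hΘ1]
    exact one_mem _
  let f : G →* K := diagHom.codRestrict K hfmem
  have hfinj : Function.Injective f := fun a b h =>
    diagHom_injective (Subtype.ext_iff.mp h)
  -- the square root
  let hw : W G := ⟨fun i => if i = 0 then g else 1, Equiv.swap 0 1⟩
  have hhmem : hw ∈ K := by
    rw [Subgroup.mem_comap]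
    have hΘhw : Θ hw = d := by
      refine SemidirectProduct.ext ?_ ?_
      · show ψ (if (0:Fin 2) = 0 then g else 1) * (ψ (if (1:Fin 2) = 0 then g else 1))⁻¹ = ψ g
        simp
      · rfl
    rw [hΘhw]
    exact Subgroup.mem_zpowers d
  have hwsq : hw * hw = diagHom g := by
    refine SemidirectProduct.ext ?_ ?_
    · funext i
      show hw.left i * hw.left ((Equiv.swap (0:Fin 2) 1).symm i) = g
      fin_cases i <;>
        simp [hw, Equiv.symm_swap, Equiv.swap_apply_left, Equiv.swap_apply_right]
    · exact Equiv.swap_mul_self _ _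
  refine ⟨K, inferInstance, f, hK2, hfinj, ⟨hw, hhmem⟩, ?_⟩
  apply Subtype.ext
  show hw ^ 2 = diagHom g
  rw [pow_two]
  exact hwsq
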